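/- Let ε > 0 and let G : ℝ → ℝ³ be a twice continuously differentiable curve with components (G₁,G₂,G₃) such that G₁(η) ≠ 0 and G'(η) ≠ 0 for all η. Define X(s,t) = √t · G(s/√t) for t > 0. Then X satisfies the unregularized vortex-pair equation X_t = (X_s × X_ss)/‖X_s‖³ − (ε/x₁)·(X_s × e₁)/‖X_s‖ for all s ∈ ℝ and t > 0 if and only if G satisfies the ODE (1/2)G(η) − (η/2)G'(η) = (G'(η) × G''(η))/‖G'(η)‖³ − (ε/G₁(η))·(G'(η) × e₁)/‖G'(η)‖ for all η ∈ ℝ. -/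

import Mathlib

noncomputable def cross3 (a b : Fin 3 → ℝ) : Fin 3 → ℝ :=
  ![a 1 * b 2 - a 2 * b 1, a 2 * b 0 - a 0 * b 2, a 0 * b 1 - a 1 * b 0]

noncomputable def norm3 (a : Fin 3 → ℝ) : ℝ :=
  Real.sqrt ((a 0) ^ 2 + (a 1) ^ 2 + (a 2) ^ 2)

noncomputable def e1 : Fin 3 → ℝ := ![1, 0, 0]

lemma cross3_smul (a b : Fin 3 → ℝ) (r : ℝ) : cross3 a (r • b) = r • cross3 a b := by
  funext i
  fin_cases i <;> simp [cross3] <;> ring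

lemma deriv1 (G : ℝ → Fin 3 → ℝ) (hG : Differentiable ℝ G) (c : ℝ) (hc : c ≠ 0) (s : ℝ) :
    deriv (fun σ => c • G (σ / c)) s = deriv G (s / c) := by
  have h1 : HasDerivAt (fun σ : ℝ => σ / c) (1 / c) s := by
    simpa using (hasDerivAt_id s).div_const c
  have h3 : HasDerivAt (fun σ => G (σ / c)) ((1 / c) • deriv G (s / c)) s :=
    (hG (s / c)).hasDerivAt.scomp s h1
  have h4 := h3.const_smul c
  have hcc : c • (1 / c) • deriv G (s / c) = deriv G (s / c) := by
    rw [smul_smul]; field_simp; exact one_smul ℝ _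
  rw [hcc] at h4
  exact h4.deriv

lemma derivG' (G : ℝ → Fin 3 → ℝ) (hG : Differentiable ℝ G) (c : ℝ) (hc : c ≠ 0) (s : ℝ) :
    deriv (fun σ => G (σ / c)) s = c⁻¹ • deriv G (s / c) := by
  have h1 : HasDerivAt (fun σ : ℝ => σ / c) (1 / c) s := by
    simpa using (hasDerivAt_id s).div_const c
  have h3 : HasDerivAt (fun σ => G (σ / c)) ((1 / c) • deriv G (s / c)) s :=
    (hG (s / c)).hasDerivAt.scomp s h1
  rw [h3.deriv, one_div]

lemma timederiv (G : ℝ → Fin 3 → ℝ) (hG : Differentiable ℝ G) (s t : ℝ) (ht : 0 < t) :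
    deriv (fun τ => Real.sqrt τ • G (s / Real.sqrt τ)) t
      = (Real.sqrt t)⁻¹ • ((1 / 2 : ℝ) • G (s / Real.sqrt t)
        - (s / Real.sqrt t / 2) • deriv G (s / Real.sqrt t)) := by
  set c := Real.sqrt t with hcdef
  have hc : 0 < c := Real.sqrt_pos.mpr ht
  have hc2 : c ^ 2 = t := Real.sq_sqrt ht.le
  have h1 : HasDerivAt Real.sqrt (1 / (2 * c)) t := Real.hasDerivAt_sqrt ht.ne'
  have h2 : HasDerivAt (fun τ => s / Real.sqrt τ) (s * (-(1 / (2 * c)) / c ^ 2)) t := by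
    simpa [div_eq_mul_inv] using (h1.inv hc.ne').const_mul s
  have h3 : HasDerivAt (fun τ => G (s / Real.sqrt τ))
      ((s * (-(1 / (2 * c)) / c ^ 2)) • deriv G (s / c)) t :=
    (hG (s / c)).hasDerivAt.scomp t h2
  have h4 : HasDerivAt (fun τ => Real.sqrt τ • G (s / Real.sqrt τ)) _ t := h1.smul h3
  rw [h4.deriv]
  funext i
  simp only [Pi.smul_apply, Pi.sub_apply, Pi.add_apply, smul_eq_mul, ← hcdef]
  field_simp
  ring

lemma key (ε : ℝ) (G : ℝ → Fin 3 → ℝ) (hdG : Differentiable ℝ G)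
    (hdG2 : Differentiable ℝ (deriv G)) (s t : ℝ) (ht : 0 < t) :
    (deriv (fun τ => Real.sqrt τ • G (s / Real.sqrt τ)) t =
      (1 / norm3 (deriv (fun σ => Real.sqrt t • G (σ / Real.sqrt t)) s) ^ 3) •
        cross3 (deriv (fun σ => Real.sqrt t • G (σ / Real.sqrt t)) s)
          (deriv (fun σ => deriv (fun σ' => Real.sqrt t • G (σ' / Real.sqrt t)) σ) s)
      - (ε / (Real.sqrt t • G (s / Real.sqrt t)) 0 /
          norm3 (deriv (fun σ => Real.sqrt t • G (σ / Real.sqrt t)) s)) •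
        cross3 (deriv (fun σ => Real.sqrt t • G (σ / Real.sqrt t)) s) e1)
    ↔ ((1 / 2 : ℝ) • G (s / Real.sqrt t) - (s / Real.sqrt t / 2) • deriv G (s / Real.sqrt t) =
        (1 / norm3 (deriv G (s / Real.sqrt t)) ^ 3) •
          cross3 (deriv G (s / Real.sqrt t)) (deriv (deriv G) (s / Real.sqrt t))
        - (ε / G (s / Real.sqrt t) 0 / norm3 (deriv G (s / Real.sqrt t))) •
          cross3 (deriv G (s / Real.sqrt t)) e1) := by
  have hc : 0 < Real.sqrt t := Real.sqrt_pos.mpr ht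
  have hd1 : deriv (fun σ => Real.sqrt t • G (σ / Real.sqrt t)) s
      = deriv G (s / Real.sqrt t) := deriv1 G hdG _ hc.ne' s
  have hfun : (fun σ => deriv (fun σ' => Real.sqrt t • G (σ' / Real.sqrt t)) σ)
      = fun σ => deriv G (σ / Real.sqrt t) := funext fun σ => deriv1 G hdG _ hc.ne' σ
  have hd2 : deriv (fun σ => deriv (fun σ' => Real.sqrt t • G (σ' / Real.sqrt t)) σ) s
      = (Real.sqrt t)⁻¹ • deriv (deriv G) (s / Real.sqrt t) := by
    rw [hfun]; exact derivG' (deriv G) hdG2 _ hc.ne' s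
  have h0 : (Real.sqrt t • G (s / Real.sqrt t)) 0 = Real.sqrt t * G (s / Real.sqrt t) 0 := rfl
  have h5 : ε / (Real.sqrt t * G (s / Real.sqrt t) 0) / norm3 (deriv G (s / Real.sqrt t))
      = (Real.sqrt t)⁻¹ * (ε / G (s / Real.sqrt t) 0 / norm3 (deriv G (s / Real.sqrt t))) := by
    simp only [div_eq_mul_inv, mul_inv]; ring
  rw [timederiv G hdG s t ht, hd1, hd2, cross3_smul, h0, h5, mul_smul,
    smul_comm (1 / norm3 (deriv G (s / Real.sqrt t)) ^ 3) ((Real.sqrt t)⁻¹), ← smul_sub]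
  exact ⟨fun h => smul_right_injective _ (inv_ne_zero hc.ne') h, fun h => by rw [h]⟩

/-- `X(s,t) = √t · G(s/√t)` solves the unregularized vortex-pair equation for
all `s` and `t > 0` iff `G` solves the self-similar ODE
`G/2 − (η/2)G' = (G' × G'')/‖G'‖³ − (ε/G₁)(G' × e₁)/‖G'‖`. -/
theorem stmt6 (ε : ℝ) (hε : 0 < ε)
    (G : ℝ → Fin 3 → ℝ) (hG : ContDiff ℝ 2 G)
    (hG1 : ∀ η, G η 0 ≠ 0) (hG' : ∀ η, deriv G η ≠ 0)
    (X : ℝ → ℝ → Fin 3 → ℝ)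
    (hX : ∀ s t, X s t = Real.sqrt t • G (s / Real.sqrt t)) :
    (∀ s t : ℝ, 0 < t →
      deriv (fun τ => X s τ) t =
        (1 / norm3 (deriv (fun σ => X σ t) s) ^ 3) •
          cross3 (deriv (fun σ => X σ t) s)
            (deriv (fun σ => deriv (fun σ' => X σ' t) σ) s)
        - (ε / X s t 0 / norm3 (deriv (fun σ => X σ t) s)) •
          cross3 (deriv (fun σ => X σ t) s) e1)
    ↔ (∀ η : ℝ,
        (1 / 2 : ℝ) • G η - (η / 2) • deriv G η =
          (1 / norm3 (deriv G η) ^ 3) • cross3 (deriv G η) (deriv (deriv G) η)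
          - (ε / G η 0 / norm3 (deriv G η)) • cross3 (deriv G η) e1) := by
  have hdG : Differentiable ℝ G := hG.differentiable (by norm_num)
  have hdG2 : Differentiable ℝ (deriv G) :=
    (contDiff_succ_iff_deriv.mp (by exact_mod_cast hG : ContDiff ℝ (1 + 1) G)).2.2.differentiable
      one_ne_zero
  constructor
  · intro h η
    simp only [hX] at h
    have := (key ε G hdG hdG2 η 1 one_pos).mp (h η 1 one_pos)
    simpa using this
  · intro h s t ht
    simp only [hX]
    exact (key ε G hdG hdG2 s t ht).mpr (h (s / Real.sqrt t))
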